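/- arXiv:2103.11489 — 3 statements merged into one kernel-verified Lean document; each statement's English description precedes it below -/
import Mathlib

section
/- Let K ≥ 1, and suppose for each x in a set D and each θ ∈ Θ, the K×K symmetric matrix A(x,θ) satisfies A(x,θ) ⪰ (1/κ) I_K for some κ > 0. Define G_t(θ_1,θ_2) = λ I_{Kd} + Σ_{s=1}^{t-1} B(x_s,θ_1,θ_2) ⊗ (x_s x_s^T) where B(x,θ_1,θ_2) = ∫_0^1 A(x, vθ_1+(1−v)θ_2) dv, and V_t = κλ I_d + Σ_{s=1}^{t-1} x_s x_s^T. Then (1/κ)(I_K ⊗ V_t) ⪯ G_t(θ_1,θ_2) for any θ_1, θ_2 ∈ Θ (Θ convex). -/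
open Kronecker Matrix

lemma myPosSemidef_zero {n : Type*} [Fintype n] : (0 : Matrix n n ℝ).PosSemidef :=
  ⟨by simp [Matrix.IsHermitian], fun y => by simp⟩

lemma myPosSemidef_add {n : Type*} [Fintype n] {M N : Matrix n n ℝ}
    (hM : M.PosSemidef) (hN : N.PosSemidef) : (M + N).PosSemidef :=
  Matrix.PosSemidef.of_dotProduct_mulVec_nonneg (hM.1.add hN.1) fun y => by
    simpa [Matrix.add_mulVec, dotProduct_add] using
      add_nonneg (hM.dotProduct_mulVec_nonneg y) (hN.dotProduct_mulVec_nonneg y)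

lemma myPosSemidef_sum {n ι : Type*} [Fintype n] (s : Finset ι) (f : ι → Matrix n n ℝ)
    (h : ∀ i ∈ s, (f i).PosSemidef) : (∑ i ∈ s, f i).PosSemidef := by
  classical
  induction s using Finset.induction with
  | empty => simpa using myPosSemidef_zero
  | insert _ _ hx ih =>
    rw [Finset.sum_insert hx]
    exact myPosSemidef_add (h _ (Finset.mem_insert_self _ _))
      (ih fun i hi => h i (Finset.mem_insert_of_mem hi))

lemma myKronPSD {K d : ℕ} {M : Matrix (Fin K) (Fin K) ℝ} (hM : M.PosSemidef)
    (x : Fin d → ℝ) : (M ⊗ₖ Matrix.vecMulVec x x).PosSemidef := by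
  refine Matrix.PosSemidef.of_dotProduct_mulVec_nonneg ?_ ?_
  · ext ⟨i, j⟩ ⟨i', j'⟩
    have h1 := hM.1.apply i i'
    simp only [Matrix.conjTranspose_apply, Matrix.kroneckerMap_apply,
      Matrix.vecMulVec_apply, star_trivial] at h1 ⊢
    rw [h1]; ring
  · intro y
    have key := hM.dotProduct_mulVec_nonneg (fun i => ∑ j, x j * y (i, j))
    simp only [star_trivial, dotProduct, Matrix.mulVec, Matrix.kroneckerMap_apply,
      Matrix.vecMulVec_apply, Fintype.sum_prod_type, Finset.mul_sum, Finset.sum_mul] at key ⊢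
    have reorder : ∀ (f : Fin K → Fin K → Fin d → Fin d → ℝ),
        ∑ i, ∑ i', ∑ j', ∑ j, f i i' j' j = ∑ i, ∑ j, ∑ i', ∑ j', f i i' j' j := by
      intro f
      refine Finset.sum_congr rfl fun i _ => ?_
      rw [Finset.sum_comm]
      conv_lhs => enter [2, j2]; rw [Finset.sum_comm]
      rw [Finset.sum_comm]
      conv_lhs => enter [2, j3]; rw [Finset.sum_comm]
    rw [reorder] at key
    refine le_trans key (le_of_eq ?_)
    refine Finset.sum_congr rfl fun i _ => Finset.sum_congr rfl fun j _ =>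
      Finset.sum_congr rfl fun i' _ => Finset.sum_congr rfl fun j' _ => by ring

theorem stmt11 {K d t : ℕ} (lam κ : ℝ) (hlam : 0 < lam) (hκ : 0 < κ)
    (x : Fin t → Fin d → ℝ) (Θ : Set (Fin K × Fin d → ℝ)) (hΘ : Convex ℝ Θ)
    (A : (Fin d → ℝ) → (Fin K × Fin d → ℝ) → Matrix (Fin K) (Fin K) ℝ)
    (hAsym : ∀ s θ, θ ∈ Θ → (A (x s) θ).IsHermitian)
    (hAlow : ∀ s θ, θ ∈ Θ →
      (A (x s) θ - κ⁻¹ • (1 : Matrix (Fin K) (Fin K) ℝ)).PosSemidef)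
    (θ₁ θ₂ : Fin K × Fin d → ℝ) (h₁ : θ₁ ∈ Θ) (h₂ : θ₂ ∈ Θ)
    (hInt : ∀ s i j, IntervalIntegrable
      (fun v => A (x s) (fun p => v * θ₁ p + (1 - v) * θ₂ p) i j)
      MeasureTheory.volume 0 1)
    (B : Fin t → Matrix (Fin K) (Fin K) ℝ)
    (hB : ∀ s i j, B s i j =
      ∫ v in (0:ℝ)..1, A (x s) (fun p => v * θ₁ p + (1 - v) * θ₂ p) i j)
    (G : Matrix (Fin K × Fin d) (Fin K × Fin d) ℝ)
    (hG : G = lam • (1 : Matrix (Fin K × Fin d) (Fin K × Fin d) ℝ) +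
      ∑ s, B s ⊗ₖ Matrix.vecMulVec (x s) (x s))
    (V : Matrix (Fin d) (Fin d) ℝ)
    (hV : V = (κ * lam) • (1 : Matrix (Fin d) (Fin d) ℝ) +
      ∑ s, Matrix.vecMulVec (x s) (x s)) :
    (G - κ⁻¹ • ((1 : Matrix (Fin K) (Fin K) ℝ) ⊗ₖ V)).PosSemidef := by
  classical
  set θv : ℝ → (Fin K × Fin d → ℝ) := fun v => (fun p => v * θ₁ p + (1 - v) * θ₂ p) with hθv
  have hmem : ∀ v : ℝ, v ∈ Set.Icc (0:ℝ) 1 → θv v ∈ Θ := by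
    intro v hv
    have h := hΘ h₁ h₂ hv.1 (by linarith [hv.2]) (by ring : v + (1 - v) = 1)
    convert h using 1
    ext p; simp [hθv]
  -- Hermitian-ness of B s - κ⁻¹ • 1
  have hCherm : ∀ s, (B s - κ⁻¹ • (1 : Matrix (Fin K) (Fin K) ℝ)).IsHermitian := by
    intro s
    ext i j
    have hBij : B s j i = B s i j := by
      rw [hB s i j, hB s j i]
      refine intervalIntegral.integral_congr fun v hv => ?_
      rw [Set.uIcc_of_le zero_le_one] at hv
      simpa using (hAsym s _ (hmem v hv)).apply i j
    simp only [Matrix.conjTranspose_apply, Matrix.sub_apply, Matrix.smul_apply,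
      Matrix.one_apply, smul_eq_mul, star_trivial]
    rw [hBij]
    congr 2
    simp [eq_comm]
  -- quadratic form nonnegativity of B s - κ⁻¹ • 1
  have hCpos : ∀ s (y : Fin K → ℝ),
      0 ≤ dotProduct (star y) ((B s - κ⁻¹ • (1 : Matrix (Fin K) (Fin K) ℝ)) *ᵥ y) := by
    intro s y
    simp only [star_trivial, dotProduct, Matrix.mulVec, Matrix.sub_apply,
      Matrix.smul_apply, smul_eq_mul, Finset.mul_sum]
    have hint2 : ∀ i j : Fin K, IntervalIntegrable
        (fun v => y i * ((A (x s) (θv v) i j - κ⁻¹ * (1 : Matrix (Fin K) (Fin K) ℝ) i j) * y j))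
        MeasureTheory.volume 0 1 := by
      intro i j
      exact (((hInt s i j).sub intervalIntegrable_const).mul_const _).const_mul _
    have hent : ∀ i j : Fin K,
        y i * ((B s i j - κ⁻¹ * (1 : Matrix (Fin K) (Fin K) ℝ) i j) * y j)
          = ∫ v in (0:ℝ)..1,
              y i * ((A (x s) (θv v) i j - κ⁻¹ * (1 : Matrix (Fin K) (Fin K) ℝ) i j) * y j) := by
      intro i j
      rw [intervalIntegral.integral_const_mul, intervalIntegral.integral_mul_const,
        intervalIntegral.integral_sub (hInt s i j) intervalIntegrable_const,
        intervalIntegral.integral_const, hB s i j]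
      simp
    calc (0:ℝ) ≤ ∫ v in (0:ℝ)..1, ∑ i, ∑ j,
          y i * ((A (x s) (θv v) i j - κ⁻¹ * (1 : Matrix (Fin K) (Fin K) ℝ) i j) * y j) := by
          refine intervalIntegral.integral_nonneg zero_le_one fun v hv => ?_
          have h0 := (hAlow s _ (hmem v hv)).dotProduct_mulVec_nonneg y
          simpa only [star_trivial, dotProduct, Matrix.mulVec, Matrix.sub_apply,
            Matrix.smul_apply, smul_eq_mul, Finset.mul_sum] using h0
      _ = ∑ i, ∫ v in (0:ℝ)..1, ∑ j,
          y i * ((A (x s) (θv v) i j - κ⁻¹ * (1 : Matrix (Fin K) (Fin K) ℝ) i j) * y j) :=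
          by
          refine intervalIntegral.integral_finset_sum (fun i _ => ?_)
          have h := IntervalIntegrable.sum (μ := MeasureTheory.volume) (a := 0) (b := 1)
            Finset.univ (fun j _ => hint2 i j)
          have e : (∑ j : Fin K, fun v =>
                y i * ((A (x s) (θv v) i j - κ⁻¹ * (1 : Matrix (Fin K) (Fin K) ℝ) i j) * y j))
              = fun v => ∑ j : Fin K,
                y i * ((A (x s) (θv v) i j - κ⁻¹ * (1 : Matrix (Fin K) (Fin K) ℝ) i j) * y j) := by
            ext v; simp
          rwa [e] at h
      _ = ∑ i, ∑ j, ∫ v in (0:ℝ)..1,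
          y i * ((A (x s) (θv v) i j - κ⁻¹ * (1 : Matrix (Fin K) (Fin K) ℝ) i j) * y j) :=
          Finset.sum_congr rfl fun i _ =>
            intervalIntegral.integral_finset_sum (fun j _ => hint2 i j)
      _ = ∑ i, ∑ j,
          y i * ((B s i j - κ⁻¹ * (1 : Matrix (Fin K) (Fin K) ℝ) i j) * y j) :=
          Finset.sum_congr rfl fun i _ => Finset.sum_congr rfl fun j _ => (hent i j).symm
  -- the key algebraic identity
  have hEq : G - κ⁻¹ • ((1 : Matrix (Fin K) (Fin K) ℝ) ⊗ₖ V)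
      = ∑ s, (B s - κ⁻¹ • (1 : Matrix (Fin K) (Fin K) ℝ)) ⊗ₖ Matrix.vecMulVec (x s) (x s) := by
    subst hG hV
    ext ⟨i, j⟩ ⟨i', j'⟩
    simp only [Matrix.sub_apply, Matrix.add_apply, Matrix.smul_apply, Matrix.one_apply,
      Matrix.kroneckerMap_apply, Matrix.sum_apply, Matrix.vecMulVec_apply, smul_eq_mul,
      Prod.mk.injEq, Finset.mul_sum, mul_add, Finset.sum_sub_distrib, sub_mul]
    have hκ' : κ⁻¹ * (κ * lam) = lam := by field_simp
    split_ifs with h1 h2 h3 h4 h5 <;> simp_all <;> ring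
  rw [hEq]
  exact myPosSemidef_sum _ _ fun s _ => myKronPSD (Matrix.PosSemidef.of_dotProduct_mulVec_nonneg (hCherm s) (hCpos s)) (x s)
end

section
/- Let 1/κ := inf over x ∈ D, θ ∈ Θ of λ_min(A(x,θ)), where A(x,θ)_{ij} = z_i(x,θ)(δ_{ij} − z_j(x,θ)) with z_i(x,θ) = exp(θ̄_i^T x)/(1 + Σ_j exp(θ̄_j^T x)), D = {x : ‖x‖ ≤ X} and Θ = {θ ∈ ℝ^{Kd} : ‖θ‖ ≤ S}. Then κ ≤ e^{SX}(1 + K e^{SX})². -/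
/-- `κ ≤ e^{SX}(1+Ke^{SX})²` where `1/κ = inf λ_min(A(x,θ))`: equivalently, for all
`x ∈ D` and `θ ∈ Θ`, `A(x,θ) ⪰ c • I` with `c = e^{-SX}/(1+Ke^{SX})² = 1/(e^{SX}(1+Ke^{SX})²)`. -/
theorem stmt16 {K d : ℕ} (S X : ℝ) (hS : 0 < S) (hX : 0 < X)
    (x : EuclideanSpace ℝ (Fin d)) (hx : ‖x‖ ≤ X)
    (θ : EuclideanSpace ℝ (Fin K × Fin d)) (hθ : ‖θ‖ ≤ S)
    (z : Fin K → ℝ)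
    (hz : ∀ k, z k = Real.exp (∑ l, θ (k, l) * x l) /
      (1 + ∑ j, Real.exp (∑ l, θ (j, l) * x l)))
    (A : Matrix (Fin K) (Fin K) ℝ)
    (hA : ∀ i j, A i j = z i * ((if i = j then (1 : ℝ) else 0) - z j)) :
    (A - (Real.exp (S * X) * (1 + K * Real.exp (S * X)) ^ 2)⁻¹ •
      (1 : Matrix (Fin K) (Fin K) ℝ)).PosSemidef := by
  set a := Real.exp (S * X) with ha
  have hapos : 0 < a := Real.exp_pos _
  have hKa : (0:ℝ) < 1 + K * a := by positivity
  set c := (a * (1 + K * a) ^ 2)⁻¹ with hc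
  have hexp : ∀ k : Fin K, |∑ l, θ (k, l) * x l| ≤ S * X := by
    intro k
    have h1 : (∑ l, θ (k, l) * x l) ^ 2 ≤ (∑ l, θ (k, l) ^ 2) * ∑ l, (x l) ^ 2 :=
      Finset.sum_mul_sq_le_sq_mul_sq _ _ _
    have hxn : ∑ l, (x l) ^ 2 ≤ X ^ 2 := by
      have h2 : Real.sqrt (∑ l, ‖x l‖ ^ 2) ≤ X := (EuclideanSpace.norm_eq x) ▸ hx
      have h3 : ∑ l, ‖x l‖ ^ 2 ≤ X ^ 2 := by
        nlinarith [Real.sq_sqrt (by positivity : (0:ℝ) ≤ ∑ l, ‖x l‖ ^ 2),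
          Real.sqrt_nonneg (∑ l, ‖x l‖ ^ 2)]
      simpa [Real.norm_eq_abs, sq_abs] using h3
    have hθn : ∑ l, θ (k, l) ^ 2 ≤ S ^ 2 := by
      have h2 : Real.sqrt (∑ p, ‖θ p‖ ^ 2) ≤ S := (EuclideanSpace.norm_eq θ) ▸ hθ
      have h3 : ∑ p, ‖θ p‖ ^ 2 ≤ S ^ 2 := by
        nlinarith [Real.sq_sqrt (by positivity : (0:ℝ) ≤ ∑ p, ‖θ p‖ ^ 2),
          Real.sqrt_nonneg (∑ p, ‖θ p‖ ^ 2)]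
      have h4 : ∑ l, θ (k, l) ^ 2 ≤ ∑ p : Fin K × Fin d, ‖θ p‖ ^ 2 := by
        rw [Fintype.sum_prod_type]
        have he : ∑ l, θ (k, l) ^ 2 = ∑ l, ‖θ (k, l)‖ ^ 2 := by
          simp [Real.norm_eq_abs, sq_abs]
        rw [he]
        exact Finset.single_le_sum (f := fun j => ∑ l, ‖θ (j, l)‖ ^ 2)
          (fun j _ => by positivity) (Finset.mem_univ k)
      linarith
    have hsq : (∑ l, θ (k, l) * x l) ^ 2 ≤ (S * X) ^ 2 := by
      calc (∑ l, θ (k, l) * x l) ^ 2 ≤ (∑ l, θ (k, l) ^ 2) * ∑ l, (x l) ^ 2 := h1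
        _ ≤ S ^ 2 * X ^ 2 := mul_le_mul hθn hxn (by positivity) (by positivity)
        _ = (S * X) ^ 2 := by ring
    exact abs_le.mpr (abs_le_of_sq_le_sq' hsq (by positivity))
  have hElb : ∀ k : Fin K, a⁻¹ ≤ Real.exp (∑ l, θ (k, l) * x l) := fun k => by
    rw [ha, ← Real.exp_neg]
    exact Real.exp_le_exp.mpr (neg_le_of_abs_le (hexp k))
  have hEub : ∀ k : Fin K, Real.exp (∑ l, θ (k, l) * x l) ≤ a := fun k =>
    Real.exp_le_exp.mpr (le_of_abs_le (hexp k))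
  set Dn := 1 + ∑ j, Real.exp (∑ l, θ (j, l) * x l) with hDn
  have hDnpos : 0 < Dn := by
    have : (0:ℝ) ≤ ∑ j, Real.exp (∑ l, θ (j, l) * x l) :=
      Finset.sum_nonneg fun j _ => (Real.exp_pos _).le
    rw [hDn]; linarith
  have hDnub : Dn ≤ 1 + K * a := by
    have h := Finset.sum_le_sum (fun j (_ : j ∈ Finset.univ) => hEub j)
    simp only [Finset.sum_const, Finset.card_univ, Fintype.card_fin, nsmul_eq_mul] at h
    rw [hDn]; linarith
  have hzlb : ∀ k, a⁻¹ / (1 + K * a) ≤ z k := by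
    intro k
    rw [hz k]
    exact div_le_div₀ (Real.exp_pos _).le (hElb k) hDnpos hDnub
  have hzpos : ∀ k, 0 < z k := fun k =>
    lt_of_lt_of_le (by positivity) (hzlb k)
  have hz0 : (1 + K * a)⁻¹ ≤ 1 - ∑ k, z k := by
    have hsumz : ∑ k, z k = (∑ j, Real.exp (∑ l, θ (j, l) * x l)) / Dn := by
      rw [Finset.sum_div]
      exact Finset.sum_congr rfl fun k _ => hz k
    have heq : 1 - ∑ k, z k = 1 / Dn := by
      rw [hsumz]
      field_simp
      rw [hDn]; ring
    rw [heq, one_div]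
    exact inv_anti₀ hDnpos hDnub
  have hcle : ∀ k, c ≤ (1 - ∑ j, z j) * z k := by
    intro k
    have h1 : a⁻¹ / (1 + K * a) * (1 + K * a)⁻¹ ≤ z k * (1 - ∑ j, z j) :=
      mul_le_mul (hzlb k) hz0 (by positivity) (hzpos k).le
    calc c = a⁻¹ / (1 + K * a) * (1 + K * a)⁻¹ := by
            rw [hc]; field_simp
      _ ≤ z k * (1 - ∑ j, z j) := h1
      _ = (1 - ∑ j, z j) * z k := mul_comm _ _
  refine Matrix.posSemidef_iff_dotProduct_mulVec.mpr ⟨?_, ?_⟩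
  · ext i j
    simp only [Matrix.conjTranspose_apply, star_trivial, Matrix.sub_apply,
      Matrix.smul_apply, Matrix.one_apply, hA i j, hA j i, smul_eq_mul]
    by_cases h : i = j
    · simp [h]
    · simp [h, Ne.symm h]; ring
  · intro v
    have hAv : ∀ i, (A.mulVec v) i = z i * v i - z i * ∑ j, z j * v j := by
      intro i
      simp only [Matrix.mulVec, dotProduct, hA]
      have he : ∀ j : Fin K, z i * ((if i = j then (1:ℝ) else 0) - z j) * v j
          = (if i = j then z i * v j else 0) - z i * (z j * v j) := by
        intro j; by_cases h : i = j <;> simp [h] <;> ring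
      rw [Finset.sum_congr rfl (fun j _ => he j), Finset.sum_sub_distrib]
      rw [Finset.sum_ite_eq Finset.univ i (fun j => z i * v j)]
      simp [Finset.mul_sum]
    have hQ : dotProduct (star v) ((A - c • 1).mulVec v)
        = ((∑ i, z i * v i ^ 2) - (∑ i, z i * v i) ^ 2) - c * ∑ i, v i ^ 2 := by
      simp only [star_trivial, Matrix.sub_mulVec, Matrix.smul_mulVec,
        Matrix.one_mulVec, dotProduct_sub, dotProduct_smul, smul_eq_mul]
      congr 1
      · calc dotProduct v (A.mulVec v)
            = ∑ i, (z i * v i ^ 2 - (z i * v i) * ∑ j, z j * v j) := by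
              simp only [dotProduct]
              refine Finset.sum_congr rfl fun i _ => ?_
              rw [hAv i]; ring
          _ = (∑ i, z i * v i ^ 2) - (∑ i, z i * v i) * ∑ j, z j * v j := by
              rw [Finset.sum_sub_distrib, ← Finset.sum_mul]
          _ = (∑ i, z i * v i ^ 2) - (∑ i, z i * v i) ^ 2 := by ring
      · simp only [dotProduct]
        congr 1
        exact Finset.sum_congr rfl fun i _ => (sq (v i)).symm
    rw [hQ]
    have hCS : (∑ i, z i * v i) ^ 2 ≤ (∑ i, z i) * ∑ i, z i * v i ^ 2 := by
      have h := Finset.sum_mul_sq_le_sq_mul_sq Finset.univ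
        (fun i => Real.sqrt (z i)) (fun i => Real.sqrt (z i) * v i)
      have he : ∀ i : Fin K, Real.sqrt (z i) * (Real.sqrt (z i) * v i) = z i * v i := by
        intro i; rw [← mul_assoc, Real.mul_self_sqrt (hzpos i).le]
      have he2 : ∀ i : Fin K, Real.sqrt (z i) ^ 2 = z i := fun i =>
        Real.sq_sqrt (hzpos i).le
      have he3 : ∀ i : Fin K, (Real.sqrt (z i) * v i) ^ 2 = z i * v i ^ 2 := by
        intro i; rw [mul_pow, he2]
      simp only [he, he2, he3] at h
      exact h
    have hkey : c * ∑ i, v i ^ 2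
        ≤ (∑ i, z i * v i ^ 2) - (∑ i, z i) * ∑ i, z i * v i ^ 2 := by
      have h1 : c * ∑ i, v i ^ 2 ≤ (1 - ∑ j, z j) * ∑ i, z i * v i ^ 2 := by
        rw [Finset.mul_sum, Finset.mul_sum]
        refine Finset.sum_le_sum fun i _ => ?_
        calc c * v i ^ 2 ≤ ((1 - ∑ j, z j) * z i) * v i ^ 2 :=
              mul_le_mul_of_nonneg_right (hcle i) (sq_nonneg _)
          _ = (1 - ∑ j, z j) * (z i * v i ^ 2) := by ring
      rw [sub_mul, one_mul] at h1
      exact h1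
    linarith
end

section
/- Let A_1 ∈ ℝ^{d×d} be symmetric positive definite, y_1, ..., y_n ∈ ℝ^d, and A_t = A_1 + Σ_{s=1}^{t-1} y_s y_s^T. Then Σ_{t=1}^n min(y_t^T A_t^{-1} y_t, 1) ≤ 2 log(det(A_{n+1}) / det(A_1)). -/
open Matrix

lemma vecMulVec_posSemidef {d : ℕ} (v : Fin d → ℝ) :
    (Matrix.vecMulVec v v).PosSemidef := by
  have : Matrix.vecMulVec v v = Matrix.replicateCol Unit v * (Matrix.replicateCol Unit v)ᴴ := by
    rw [Matrix.vecMulVec_eq Unit]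
    congr 1
  rw [this]
  exact Matrix.posSemidef_self_mul_conjTranspose _

lemma min_le_two_log (x : ℝ) (hx : 0 ≤ x) : min x 1 ≤ 2 * Real.log (1 + x) := by
  rcases le_or_gt x 1 with h | h
  · rw [min_eq_left h]
    have hpos : (0:ℝ) < 1 + x := by linarith
    have key : Real.exp (x / 2) ≤ 1 + x := by
      have h1 : -(x/2) + 1 ≤ Real.exp (-(x/2)) := Real.add_one_le_exp _
      have h2 : Real.exp (-(x/2)) = (Real.exp (x/2))⁻¹ := Real.exp_neg _
      have h3 : (0:ℝ) < Real.exp (x/2) := Real.exp_pos _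
      have h4 : (1 - x/2) * Real.exp (x/2) ≤ 1 := by
        rw [h2] at h1
        calc (1 - x/2) * Real.exp (x/2) ≤ (Real.exp (x/2))⁻¹ * Real.exp (x/2) := by
              apply mul_le_mul_of_nonneg_right _ h3.le
              linarith
          _ = 1 := inv_mul_cancel₀ h3.ne'
      nlinarith [h4, h3]
    have hlog : x / 2 ≤ Real.log (1 + x) := by
      rw [Real.le_log_iff_exp_le hpos]
      exact key
    linarith
  · rw [min_eq_right h.le]
    have h2 : Real.log 2 ≤ Real.log (1 + x) := by
      apply Real.log_le_log (by norm_num)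
      linarith
    have : (0.6931471803 : ℝ) < Real.log 2 := Real.log_two_gt_d9
    linarith

theorem stmt17 {d n : ℕ} (A₁ : Matrix (Fin d) (Fin d) ℝ) (h₁ : A₁.PosDef)
    (y : ℕ → Fin d → ℝ) (A : ℕ → Matrix (Fin d) (Fin d) ℝ)
    (hA : ∀ t, A t = A₁ + ∑ s ∈ Finset.range t, Matrix.vecMulVec (y s) (y s)) :
    ∑ t ∈ Finset.range n, min (y t ⬝ᵥ (A t)⁻¹.mulVec (y t)) 1 ≤
      2 * Real.log ((A n).det / A₁.det) := by
  -- positive definiteness of each A t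
  have hPD : ∀ t, (A t).PosDef := by
    intro t
    rw [hA t]
    apply h₁.add_posSemidef
    apply Finset.sum_induction _ _ (fun a b ha hb => ha.add hb)
    · exact Matrix.PosSemidef.zero
    · intro s _
      exact vecMulVec_posSemidef (y s)
  -- recursion
  have hstep : ∀ t, A (t + 1) = A t + Matrix.vecMulVec (y t) (y t) := by
    intro t
    rw [hA (t+1), hA t, Finset.sum_range_succ, add_assoc]
  set q : ℕ → ℝ := fun t => y t ⬝ᵥ (A t)⁻¹.mulVec (y t) with hq
  have hqnonneg : ∀ t, 0 ≤ q t := by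
    intro t
    have := ((hPD t).inv).posSemidef.dotProduct_mulVec_nonneg (y t)
    simpa using this
  -- determinant recursion
  have hdet : ∀ t, (A (t+1)).det = (A t).det * (1 + q t) := by
    intro t
    rw [hstep t, Matrix.vecMulVec_eq Unit,
      Matrix.det_add_replicateCol_mul_replicateRow (isUnit_iff_ne_zero.mpr (hPD t).det_pos.ne') (y t) (y t)]
    congr 1
    rw [Matrix.mul_assoc, ← Matrix.replicateCol_mulVec, Matrix.det_unique]
    simp [Matrix.add_apply, Matrix.one_apply_eq, Matrix.replicateRow_mul_replicateCol_apply, hq]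
  have hdetpos : ∀ t, 0 < (A t).det := fun t => (hPD t).det_pos
  -- log telescoping
  have hlog : ∀ t, Real.log ((A (t+1)).det) - Real.log ((A t).det) = Real.log (1 + q t) := by
    intro t
    rw [hdet t, Real.log_mul (hdetpos t).ne' (by nlinarith [hqnonneg t])]
    ring
  have hA0 : A 0 = A₁ := by rw [hA 0]; simp
  have htel : Real.log ((A n).det / A₁.det)
      = ∑ t ∈ Finset.range n, Real.log (1 + q t) := by
    rw [Real.log_div (hdetpos n).ne' (by rw [← hA0]; exact (hdetpos 0).ne')]
    rw [← hA0]
    rw [← Finset.sum_range_sub (fun t => Real.log ((A t).det))]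
    exact Finset.sum_congr rfl fun t _ => hlog t
  rw [htel, Finset.mul_sum]
  apply Finset.sum_le_sum
  intro t _
  exact min_le_two_log (q t) (hqnonneg t)
end
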